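/- Let A be a symmetric positive-definite matrix with spectral decomposition A = ∑ᵢ λᵢ vᵢvᵢᵀ and X an arbitrary matrix. Then the identity D(log)(A)[AX + XA] = 2X holds if and only if X commutes with A, where D(log)(A) is the Fréchet derivative of the matrix logarithm at A. -/
import Mathlib


open Matrix

/-- Auxiliary: `2*(t-1)/(t+1) < log t` for `t > 1`. -/
lemma aux_log_ineq (t : ℝ) (ht : 1 < t) : 2*(t-1)/(t+1) < Real.log t := by
  have key : StrictMonoOn (fun s : ℝ => Real.log s - 2*(s-1)/(s+1)) (Set.Ici 1) := by
    apply strictMonoOn_of_deriv_pos (convex_Ici 1)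
    · apply ContinuousOn.sub
      · exact Real.continuousOn_log.mono (fun x hx => by
          simp only [Set.mem_Ici] at hx
          simp only [Set.mem_compl_iff, Set.mem_singleton_iff]
          intro h; rw [h] at hx; linarith)
      · apply ContinuousOn.div
        · fun_prop
        · fun_prop
        · intro x hx
          simp only [Set.mem_Ici] at hx
          intro h; linarith
    · intro x hx
      rw [interior_Ici] at hx
      simp only [Set.mem_Ioi] at hx
      have hx0 : (0:ℝ) < x := by linarith
      have hx1 : x + 1 ≠ 0 := by linarith
      have h1 : HasDerivAt Real.log x⁻¹ x := Real.hasDerivAt_log hx0.ne'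
      have h2a : HasDerivAt (fun s : ℝ => 2*(s-1)) 2 x := by
        simpa using ((hasDerivAt_id x).sub_const 1).const_mul 2
      have h2b : HasDerivAt (fun s : ℝ => s+1) 1 x := (hasDerivAt_id x).add_const 1
      have h2 : HasDerivAt (fun s : ℝ => 2*(s-1)/(s+1))
          ((2*(x+1) - 2*(x-1)*1)/((x+1)^2)) x := h2a.div h2b hx1
      have h3 : HasDerivAt (fun s : ℝ => Real.log s - 2*(s-1)/(s+1))
          (x⁻¹ - (2*(x+1) - 2*(x-1)*1)/((x+1)^2)) x := h1.sub h2
      rw [h3.deriv]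
      have e : x⁻¹ - (2*(x+1) - 2*(x-1)*1)/((x+1)^2)
          = (x-1)^2 / (x*(x+1)^2) := by
        field_simp
        ring
      rw [e]
      exact div_pos (pow_pos (by linarith) 2) (by positivity)
  have h1 : (1:ℝ) ∈ Set.Ici (1:ℝ) := Set.mem_Ici.mpr le_rfl
  have h2 : t ∈ Set.Ici (1:ℝ) := le_of_lt ht
  have := key h1 h2 ht
  simp only [Real.log_one] at this
  linarith

/-- Auxiliary: for `0 < y < x`, `2*(x-y) < (x+y)*(log x - log y)`. -/
lemma aux_logmean (x y : ℝ) (hy : 0 < y) (hxy : y < x) :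
    2*(x-y) < (x+y)*(Real.log x - Real.log y) := by
  have hx : 0 < x := lt_trans hy hxy
  have ht : 1 < x/y := (one_lt_div hy).mpr hxy
  have h := aux_log_ineq (x/y) ht
  rw [Real.log_div hx.ne' hy.ne'] at h
  have e : 2*(x/y-1)/(x/y+1) = 2*(x-y)/(x+y) := by
    field_simp
  rw [e, div_lt_iff₀ (by linarith : (0:ℝ) < x + y)] at h
  nlinarith

theorem deriv_log_two_iff_commute {d : ℕ}
    (A X Q : Matrix (Fin d) (Fin d) ℝ) (lam : Fin d → ℝ)
    (hQ : Qᵀ * Q = 1) (hdiag : Qᵀ * A * Q = Matrix.diagonal lam)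
    (hpos : ∀ i, 0 < lam i) :
    (Q * (Matrix.of fun i j =>
        (if lam i = lam j then (lam i)⁻¹
          else (Real.log (lam i) - Real.log (lam j)) / (lam i - lam j)) *
        ((Qᵀ * (A * X + X * A) * Q) i j)) * Qᵀ) = (2 : ℝ) • X ↔
      A * X = X * A := by
  have hQ' : Q * Qᵀ = 1 := mul_eq_one_comm.mp hQ
  set Y := Qᵀ * X * Q with hY
  -- conjugation cancellation lemmas
  have unconj : ∀ M : Matrix (Fin d) (Fin d) ℝ, Q * (Qᵀ * M * Q) * Qᵀ = M := by
    intro M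
    calc Q * (Qᵀ * M * Q) * Qᵀ = (Q * Qᵀ) * M * (Q * Qᵀ) := by
          simp only [Matrix.mul_assoc]
      _ = M := by rw [hQ', Matrix.one_mul, Matrix.mul_one]
  have unconj' : ∀ M : Matrix (Fin d) (Fin d) ℝ, Qᵀ * (Q * M * Qᵀ) * Q = M := by
    intro M
    calc Qᵀ * (Q * M * Qᵀ) * Q = (Qᵀ * Q) * M * (Qᵀ * Q) := by
          simp only [Matrix.mul_assoc]
      _ = M := by rw [hQ, Matrix.one_mul, Matrix.mul_one]
  have key1 : Qᵀ * A * Q * (Qᵀ * X * Q) = Qᵀ * (A * X) * Q := by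
    calc Qᵀ * A * Q * (Qᵀ * X * Q) = Qᵀ * A * (Q * Qᵀ) * X * Q := by
          simp only [Matrix.mul_assoc]
      _ = Qᵀ * (A * X) * Q := by rw [hQ']; simp only [Matrix.mul_one, Matrix.mul_assoc]
  have key2 : (Qᵀ * X * Q) * (Qᵀ * A * Q) = Qᵀ * (X * A) * Q := by
    calc (Qᵀ * X * Q) * (Qᵀ * A * Q) = Qᵀ * X * (Q * Qᵀ) * A * Q := by
          simp only [Matrix.mul_assoc]
      _ = Qᵀ * (X * A) * Q := by rw [hQ']; simp only [Matrix.mul_one, Matrix.mul_assoc]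
  rw [hdiag] at key1 key2
  have hAX : Qᵀ * (A * X + X * A) * Q
      = Matrix.diagonal lam * Y + Y * Matrix.diagonal lam := by
    simp only [Matrix.mul_add, Matrix.add_mul]
    rw [key1, key2]
  -- entrywise positivity fact
  have hgt : ∀ i j : Fin d, lam i ≠ lam j →
      2 < (Real.log (lam i) - Real.log (lam j)) / (lam i - lam j) * (lam i + lam j) := by
    intro i j hne
    rcases lt_or_gt_of_ne hne with hlt | hgt'
    · -- lam i < lam j
      have h := aux_logmean (lam j) (lam i) (hpos i) hlt
      have hΔ : lam i - lam j < 0 := by linarith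
      rw [div_mul_eq_mul_div, lt_div_iff_of_neg hΔ]
      nlinarith
    · -- lam j < lam i
      have h := aux_logmean (lam i) (lam j) (hpos j) hgt'
      have hΔ : (0:ℝ) < lam i - lam j := by linarith
      rw [div_mul_eq_mul_div, lt_div_iff₀ hΔ]
      nlinarith
  constructor
  · intro hEq
    -- transfer to eigenbasis
    have hEq2 : (Matrix.of fun i j =>
        (if lam i = lam j then (lam i)⁻¹
          else (Real.log (lam i) - Real.log (lam j)) / (lam i - lam j)) *
        ((Qᵀ * (A * X + X * A) * Q) i j)) = (2:ℝ) • Y := by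
      have := congrArg (fun M => Qᵀ * M * Q) hEq
      simp only [unconj'] at this
      rw [this, Matrix.mul_smul, Matrix.smul_mul]
    have hzero : ∀ i j : Fin d, lam i ≠ lam j → Y i j = 0 := by
      intro i j hne
      have h := congrFun (congrFun hEq2 i) j
      simp only [Matrix.of_apply, hAX, Matrix.add_apply, Matrix.diagonal_mul,
        Matrix.mul_diagonal, Matrix.smul_apply, smul_eq_mul, if_neg hne] at h
      have hg := hgt i j hne
      have h0 : ((Real.log (lam i) - Real.log (lam j)) / (lam i - lam j) * (lam i + lam j)
          - 2) * Y i j = 0 := by linear_combination h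
      rcases mul_eq_zero.mp h0 with h1 | h1
      · exfalso; linarith [sub_eq_zero.mp h1 ▸ hg]
      · exact h1
    -- conclude commutation
    have hDY : Matrix.diagonal lam * Y = Y * Matrix.diagonal lam := by
      ext i j
      simp only [Matrix.diagonal_mul, Matrix.mul_diagonal]
      by_cases hij : lam i = lam j
      · rw [hij]; ring
      · rw [hzero i j hij]; ring
    rw [key1, key2] at hDY
    have := congrArg (fun M => Q * M * Qᵀ) hDY
    simpa only [unconj] using this
  · intro hComm
    have hDY : Matrix.diagonal lam * Y = Y * Matrix.diagonal lam := by
      rw [key1, key2, hComm]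
    have hzero : ∀ i j : Fin d, lam i ≠ lam j → Y i j = 0 := by
      intro i j hne
      have h := congrFun (congrFun hDY i) j
      simp only [Matrix.diagonal_mul, Matrix.mul_diagonal] at h
      have : (lam i - lam j) * Y i j = 0 := by linear_combination h
      rcases mul_eq_zero.mp this with h1 | h1
      · exact absurd (sub_eq_zero.mp h1) hne
      · exact h1
    have hM : (Matrix.of fun i j =>
        (if lam i = lam j then (lam i)⁻¹
          else (Real.log (lam i) - Real.log (lam j)) / (lam i - lam j)) *
        ((Qᵀ * (A * X + X * A) * Q) i j)) = (2:ℝ) • Y := by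
      ext i j
      simp only [Matrix.of_apply, hAX, Matrix.add_apply, Matrix.diagonal_mul,
        Matrix.mul_diagonal, Matrix.smul_apply, smul_eq_mul]
      by_cases hij : lam i = lam j
      · rw [if_pos hij, ← hij]
        have := (hpos i).ne'
        field_simp
        ring
      · rw [if_neg hij, hzero i j hij]
        ring
    rw [hM, Matrix.mul_smul, Matrix.smul_mul, hY, unconj]
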